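/- Let n ≥ 1 and let X be the pushout in SSet of the boundary inclusion ∂Δ[n] ⟶ Δ[n] along the unique map ∂Δ[n] ⟶ Δ[0] (so X is the model Δ[n]/∂Δ[n] of the n-sphere). Then every simplicial map from X to a non-singular simplicial set factors uniquely through the unique map X ⟶ Δ[0]; i.e., for every non-singular A and every k : X ⟶ A there is a unique k̄ : Δ[0] ⟶ A with k = k̄ ∘ (X ⟶ Δ[0]). In other words, the desingularization of Δ[n]/∂Δ[n] is Δ[0]. -/

import Mathlib

open CategoryTheory CategoryTheory.Limits Simplicial SSet

/-- The `i`-th vertex of an `n`-simplex `x`, i.e. `x · εᵢ`, where `εᵢ : ⦋0⦌ ⟶ ⦋n⦌`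
sends `0` to `i`. -/
def SSet.vertex (X : SSet) {n : ℕ} (x : X _⦋n⦌) (i : Fin (n + 1)) : X _⦋0⦌ :=
  X.map (SimplexCategory.const ⦋0⦌ ⦋n⦌ i).op x

/-- A simplex is degenerate if it is obtained from a simplex of strictly lower degree
by the action of a (necessarily non-identity) epimorphism of the simplex category. -/
def SSet.IsDegenerate (X : SSet) {n : ℕ} (x : X _⦋n⦌) : Prop :=
  ∃ (m : ℕ) (_ : m < n) (σ : (⦋n⦌ : SimplexCategory) ⟶ ⦋m⦌) (y : X _⦋m⦌),
    Epi σ ∧ x = X.map σ.op y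

/-- A simplicial set is non-singular if the representing map of each of its
non-degenerate simplices is a monomorphism. -/
def SSet.NonSingular (X : SSet) : Prop :=
  ∀ (n : ℕ) (x : X _⦋n⦌), ¬ X.IsDegenerate x → Mono (((SSet.yonedaEquiv (X := X) (n := ⦋n⦌)).symm x))

/-- The relation `≈ₓ` on `Fin (n + 1)`: `i ≈ₓ k` iff there exists `j` with
`i ≤ k`, `k ≤ j` and `x·εᵢ = x·εⱼ`. -/
def SSet.approxRel (X : SSet) {n : ℕ} (x : X _⦋n⦌) (i k : Fin (n + 1)) : Prop :=
  ∃ j, i ≤ k ∧ k ≤ j ∧ X.vertex x i = X.vertex x j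

/-- The equivalence relation `Rₓ` generated by `≈ₓ`. -/
def SSet.vertexRel (X : SSet) {n : ℕ} (x : X _⦋n⦌) : Fin (n + 1) → Fin (n + 1) → Prop :=
  Relation.EqvGen (X.approxRel x)

instance Δ0_subsingleton (m : SimplexCategoryᵒᵖ) : Subsingleton (Δ[0].obj m) :=
  (SSet.stdSimplex.objEquiv (n := ⦋0⦌) (m := m)).subsingleton

/-- The unique map to the standard `0`-simplex, which is terminal in `SSet`. -/
def SSet.toPt (Y : SSet.{0}) : Y ⟶ Δ[0] where
  app m := TypeCat.ofHom fun _ => SSet.stdSimplex.const 0 0 m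
  naturality _ _ _ := by ext; exact Subsingleton.elim _ _

-- auxiliary lemmas

lemma hom_to_pt_unique {Y : SSet.{0}} (f g : Y ⟶ Δ[0]) : f = g := by
  ext m x

lemma yE_comp {A : SSet.{0}} {m n : SimplexCategory} (g : m ⟶ n)
    (f : SSet.stdSimplex.obj n ⟶ A) :
    SSet.yonedaEquiv (SSet.stdSimplex.map g ≫ f) = A.map g.op (SSet.yonedaEquiv f) :=
  (yonedaEquiv_naturality g f).symm

lemma vertex_map_epi {A : SSet.{0}} {m m' : ℕ} (σ : (⦋m⦌ : SimplexCategory) ⟶ ⦋m'⦌)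
    (y : A _⦋m'⦌) (j : Fin (m + 1)) :
    A.vertex (A.map σ.op y) j = A.vertex y (σ.toOrderHom j) := by
  unfold SSet.vertex
  rw [← FunctorToTypes.map_comp_apply, ← op_comp, SimplexCategory.const_comp]

lemma const_simplex (A : SSet.{0}) (hA : A.NonSingular) :
    ∀ (m : ℕ) (a : A _⦋m⦌), (∀ i : Fin (m + 1), A.vertex a i = A.vertex a 0) →
      a = A.map (SimplexCategory.const ⦋m⦌ ⦋0⦌ 0).op (A.vertex a 0) := by
  intro m
  induction m using Nat.strong_induction_on with
  | _ m ih =>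
    intro a hv
    by_cases hd : A.IsDegenerate a
    · obtain ⟨m', hm', σ, y, hepi, rfl⟩ := hd
      have hσ : Function.Surjective σ.toOrderHom :=
        SimplexCategory.epi_iff_surjective.mp hepi
      have hvy : ∀ i : Fin (m' + 1), A.vertex y i = A.vertex y 0 := by
        intro i
        obtain ⟨j, hj⟩ := hσ i
        obtain ⟨j0, hj0⟩ := hσ 0
        rw [← hj, ← hj0, ← vertex_map_epi, ← vertex_map_epi, hv j, hv j0]
      have := ih m' hm' y hvy
      conv_lhs => rw [this]
      rw [← FunctorToTypes.map_comp_apply, ← op_comp]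
      have h1 : σ ≫ SimplexCategory.const ⦋m'⦌ ⦋0⦌ 0 = SimplexCategory.const ⦋m⦌ ⦋0⦌ 0 :=
        SimplexCategory.eq_const_to_zero _
      rw [h1]
      rw [vertex_map_epi]
      exact congrArg _ (hvy _).symm
    · have hmono := hA m a hd
      rcases Nat.eq_zero_or_pos m with hm | hm
      · subst hm
        have : SimplexCategory.const ⦋0⦌ ⦋0⦌ (0 : Fin 1) = 𝟙 _ :=
          SimplexCategory.const_eq_id
        unfold SSet.vertex
        rw [← FunctorToTypes.map_comp_apply, ← op_comp, this]
        simp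
      · exfalso
        set f := (SSet.yonedaEquiv (X := A) (n := ⦋m⦌)).symm a with hf
        have h0 : SSet.stdSimplex.map (SimplexCategory.const ⦋0⦌ ⦋m⦌ 0) ≫ f
            = SSet.stdSimplex.map (SimplexCategory.const ⦋0⦌ ⦋m⦌ 1) ≫ f := by
          apply SSet.yonedaEquiv.injective
          rw [yE_comp, yE_comp, Equiv.apply_symm_apply]
          exact (hv 1).symm
        have := (cancel_mono f).mp h0
        have h2 : (SimplexCategory.const ⦋0⦌ ⦋m⦌ 0) = (SimplexCategory.const ⦋0⦌ ⦋m⦌ 1) := by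
          have h' := congrArg (fun (g : Δ[0] ⟶ Δ[m]) => SSet.stdSimplex.objEquiv (SSet.yonedaEquiv g)) this
          exact h'
        have h3 : (0 : Fin (m + 1)) = 1 :=
          congrArg (fun g => SimplexCategory.Hom.toOrderHom g 0) h2
        have h4 : (0 : ℕ) = 1 % (m + 1) := congrArg Fin.val h3
        rw [Nat.mod_eq_of_lt (by omega)] at h4
        omega

def ptToBoundary (n : ℕ) (hn : 1 ≤ n) (i : Fin (n + 1)) : Δ[0] ⟶ ∂Δ[n] where
  app m := TypeCat.ofHom fun _ => ⟨SSet.stdSimplex.const n i m, by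
    intro hsurj
    have h2 : 2 ≤ n + 1 := by omega
    obtain ⟨j, hj⟩ : ∃ j : Fin (n + 1), j ≠ i := by
      by_cases h0 : i = 0
      · refine ⟨⟨1, by omega⟩, ?_⟩
        subst h0
        intro hc
        have := congrArg Fin.val hc
        simp at this
      · exact ⟨0, fun hc => h0 hc.symm⟩
    obtain ⟨x, hx⟩ := hsurj j
    exact hj hx.symm⟩
  naturality m m' g := by
    ext x
    apply Subtype.ext
    rfl


/-- Every map from `Δ[n]/∂Δ[n]` (with `n ≥ 1`) to a non-singular simplicial set
factors uniquely through the unique map to `Δ[0]`: the desingularization of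
`Δ[n]/∂Δ[n]` is `Δ[0]`. -/
theorem desingularization_sphere (n : ℕ) (hn : 1 ≤ n) (A : SSet.{0}) (hA : A.NonSingular)
    (k : pushout ((SSet.boundary n).ι) (SSet.toPt ∂Δ[n]) ⟶ A) :
    ∃! kbar : Δ[0] ⟶ A,
      k = SSet.toPt (pushout ((SSet.boundary n).ι) (SSet.toPt ∂Δ[n])) ≫ kbar := by
  have hinrpt : pushout.inr ((SSet.boundary n).ι) (SSet.toPt ∂Δ[n])
      ≫ SSet.toPt (pushout ((SSet.boundary n).ι) (SSet.toPt ∂Δ[n])) = 𝟙 Δ[0] :=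
    hom_to_pt_unique _ _
  refine ⟨pushout.inr ((SSet.boundary n).ι) (SSet.toPt ∂Δ[n]) ≫ k, ?_, ?_⟩
  · -- existence
    have key : ∀ i : Fin (n + 1),
        SSet.stdSimplex.map (SimplexCategory.const ⦋0⦌ ⦋n⦌ i)
          ≫ pushout.inl ((SSet.boundary n).ι) (SSet.toPt ∂Δ[n])
        = pushout.inr ((SSet.boundary n).ι) (SSet.toPt ∂Δ[n]) := by
      intro i
      have hfac : ptToBoundary n hn i ≫ (SSet.boundary n).ι
          = SSet.stdSimplex.map (SimplexCategory.const ⦋0⦌ ⦋n⦌ i) := by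
        ext m x
        show SSet.stdSimplex.const n i m = _
        apply SSet.stdSimplex.objEquiv.injective
        apply SimplexCategory.Hom.ext
        rfl
      rw [← hfac, Category.assoc, pushout.condition, ← Category.assoc,
        hom_to_pt_unique (ptToBoundary n hn i ≫ SSet.toPt ∂Δ[n]) (𝟙 Δ[0]),
        Category.id_comp]
    have hva : ∀ i : Fin (n + 1),
        A.vertex (SSet.yonedaEquiv
            (pushout.inl ((SSet.boundary n).ι) (SSet.toPt ∂Δ[n]) ≫ k)) i
          = SSet.yonedaEquiv
              (pushout.inr ((SSet.boundary n).ι) (SSet.toPt ∂Δ[n]) ≫ k) := by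
      intro i
      have h := yE_comp (A := A) (SimplexCategory.const ⦋0⦌ ⦋n⦌ i)
        (pushout.inl ((SSet.boundary n).ι) (SSet.toPt ∂Δ[n]) ≫ k)
      rw [← Category.assoc, key i] at h
      exact h.symm
    have hconst := const_simplex A hA n
      (SSet.yonedaEquiv (pushout.inl ((SSet.boundary n).ι) (SSet.toPt ∂Δ[n]) ≫ k))
      (fun i => (hva i).trans (hva 0).symm)
    apply pushout.hom_ext
    · have h1 : pushout.inl ((SSet.boundary n).ι) (SSet.toPt ∂Δ[n])
          ≫ SSet.toPt (pushout ((SSet.boundary n).ι) (SSet.toPt ∂Δ[n]))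
          = SSet.stdSimplex.map (SimplexCategory.const ⦋n⦌ ⦋0⦌ 0) :=
        hom_to_pt_unique _ _
      rw [← Category.assoc, h1]
      apply SSet.yonedaEquiv.injective
      rw [yE_comp]
      rw [hconst, hva 0]
    · rw [← Category.assoc, hinrpt, Category.id_comp]
  · intro kbar' h
    rw [h, ← Category.assoc, hinrpt, Category.id_comp]
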